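/- Let O ⊆ ℝ^p be an open set and ν a finite (nonnegative) measure on ℝ^p such that ∫ e^{u·x} dν(x) < ∞ for all u ∈ O. Then the map z ↦ ∫ e^{z·x} dν(x) (where z·x = Σ zᵢ xᵢ for z ∈ ℂ^p, x ∈ ℝ^p) is well-defined and analytic on the open strip S(O) = {z ∈ ℂ^p : Re z ∈ O}. -/

import Mathlib

set_option maxHeartbeats 2000000
set_option synthInstance.maxHeartbeats 1000000
open MeasureTheory RealInnerProductSpace
open scoped ENNReal

namespace Statement7Aux

variable {p : ℕ} {ν : Measure (EuclideanSpace ℝ (Fin p))}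

noncomputable def L (x : EuclideanSpace ℝ (Fin p)) : EuclideanSpace ℂ (Fin p) →L[ℂ] ℂ :=
  innerSL ℂ (WithLp.toLp 2 (fun i => (x i : ℂ)) : EuclideanSpace ℂ (Fin p))

lemma L_apply (x : EuclideanSpace ℝ (Fin p)) (z : EuclideanSpace ℂ (Fin p)) :
    L x z = ∑ i, z i * (x i : ℂ) := by
  simp [L, innerSL_apply_apply, PiLp.inner_apply, Complex.conj_ofReal, mul_comm]

lemma norm_L_le (x : EuclideanSpace ℝ (Fin p)) : ‖L x‖ ≤ ‖x‖ := by
  rw [L, innerSL_apply_norm]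
  rw [EuclideanSpace.norm_eq, EuclideanSpace.norm_eq]
  simp

lemma continuous_L : Continuous (L (p := p)) := by
  apply Continuous.comp (map_continuous (innerSL ℂ))
  exact PiLp.continuous_toLp 2 (fun _ : Fin p => ℂ) |>.comp
    (continuous_pi fun i => Complex.continuous_ofReal.comp
      ((continuous_apply i).comp (PiLp.continuous_ofLp 2 (fun _ : Fin p => ℝ))))

lemma re_sum (z : EuclideanSpace ℂ (Fin p)) (x : EuclideanSpace ℝ (Fin p)) :
    (∑ i, z i * (x i : ℂ)).re
      = ⟪(WithLp.toLp 2 (fun i => (z i).re) : EuclideanSpace ℝ (Fin p)), x⟫ := by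
  rw [Complex.re_sum, PiLp.inner_apply]
  exact Finset.sum_congr rfl fun i _ => by
    simp [Complex.mul_re, RCLike.inner_apply, mul_comm]

lemma norm_exp_sum (z : EuclideanSpace ℂ (Fin p)) (x : EuclideanSpace ℝ (Fin p)) :
    ‖Complex.exp (∑ i, z i * (x i : ℂ))‖
      = Real.exp ⟪(WithLp.toLp 2 (fun i => (z i).re) : EuclideanSpace ℝ (Fin p)), x⟫ := by
  rw [Complex.norm_exp, re_sum]

lemma continuous_integrand (z : EuclideanSpace ℂ (Fin p)) :
    Continuous fun x : EuclideanSpace ℝ (Fin p) =>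
      Complex.exp (∑ i, z i * (x i : ℂ)) := by
  have h : Continuous fun x : EuclideanSpace ℝ (Fin p) => L x z :=
    (ContinuousLinearMap.apply ℂ ℂ z).continuous.comp continuous_L
  simpa [L_apply, Function.comp_def] using Complex.continuous_exp.comp h

lemma integrable_exp_inner (ν : Measure (EuclideanSpace ℝ (Fin p)))
    (v : EuclideanSpace ℝ (Fin p))
    (h : ∫⁻ x, ENNReal.ofReal (Real.exp ⟪v, x⟫) ∂ν < ⊤) :
    Integrable (fun x => Real.exp ⟪v, x⟫) ν := by
  refine ⟨Continuous.aestronglyMeasurable ?_, ?_⟩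
  · exact Real.continuous_exp.comp (continuous_const.inner continuous_id)
  · rw [hasFiniteIntegral_iff_ofReal (Filter.Eventually.of_forall fun x => (Real.exp_pos _).le)]
    exact h

lemma integrable_integrand {O : Set (EuclideanSpace ℝ (Fin p))}
    (hfin : ∀ u ∈ O, ∫⁻ x, ENNReal.ofReal (Real.exp ⟪u, x⟫) ∂ν < ⊤)
    {z : EuclideanSpace ℂ (Fin p)}
    (hz : (WithLp.toLp 2 (fun i => (z i).re) : EuclideanSpace ℝ (Fin p)) ∈ O) :
    Integrable (fun x => Complex.exp (∑ i, z i * (x i : ℂ))) ν := by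
  have h := integrable_exp_inner ν _ (hfin _ hz)
  refine h.mono' (continuous_integrand z).aestronglyMeasurable (.of_forall fun x => ?_)
  rw [norm_exp_sum]

lemma norm_le_sum_abs (x : EuclideanSpace ℝ (Fin p)) : ‖x‖ ≤ ∑ i, |x i| := by
  rw [EuclideanSpace.norm_eq]
  have h1 : ∑ i, ‖x i‖ ^ 2 ≤ (∑ i, |x i|) ^ 2 := by
    simpa [Real.norm_eq_abs, sq_abs] using
      Finset.sum_sq_le_sq_sum_of_nonneg (s := Finset.univ) (f := fun i => |x i|)
      (fun i _ => abs_nonneg _)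
  calc Real.sqrt (∑ i, ‖x i‖ ^ 2) ≤ Real.sqrt ((∑ i, |x i|) ^ 2) := Real.sqrt_le_sqrt h1
    _ = ∑ i, |x i| := Real.sqrt_sq (Finset.sum_nonneg fun i _ => abs_nonneg _)

lemma exists_delta {O : Set (EuclideanSpace ℝ (Fin p))} (hO : IsOpen O)
    (hfin : ∀ u ∈ O, ∫⁻ x, ENNReal.ofReal (Real.exp ⟪u, x⟫) ∂ν < ⊤)
    {u : EuclideanSpace ℝ (Fin p)} (hu : u ∈ O) :
    ∃ δ : ℝ, 0 < δ ∧ Integrable (fun x => Real.exp (⟪u, x⟫ + δ * ‖x‖)) ν := by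
  obtain ⟨ε, εpos, hball⟩ := Metric.isOpen_iff.1 hO u hu
  have hsq : (0:ℝ) ≤ Real.sqrt p := Real.sqrt_nonneg _
  set δ : ℝ := ε / (Real.sqrt p + 2) with hδ
  have δpos : 0 < δ := div_pos εpos (by linarith)
  refine ⟨δ, δpos, ?_⟩
  set v : Finset (Fin p) → EuclideanSpace ℝ (Fin p) :=
    fun T => (WithLp.toLp 2 (fun i => if i ∈ T then δ else -δ) : EuclideanSpace ℝ (Fin p)) with hv
  have hvO : ∀ T, u + v T ∈ O := by
    intro T
    apply hball
    rw [Metric.mem_ball, dist_eq_norm, add_sub_cancel_left]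
    have hnorm : ‖v T‖ = δ * Real.sqrt p := by
      rw [EuclideanSpace.norm_eq]
      have h2 : ∀ i : Fin p, ‖v T i‖ ^ 2 = δ ^ 2 := by
        intro i; by_cases h : i ∈ T <;>
          simp [hv, h, Real.norm_eq_abs, sq_abs, abs_neg]
      rw [Finset.sum_congr rfl fun i _ => h2 i, Finset.sum_const, Finset.card_univ,
        Fintype.card_fin, nsmul_eq_mul, Real.sqrt_mul (Nat.cast_nonneg p),
        Real.sqrt_sq δpos.le, mul_comm]
    rw [hnorm]
    have hδε : δ * (Real.sqrt p + 2) = ε := by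
      rw [hδ, div_mul_cancel₀]; positivity
    nlinarith
  have hg : Integrable
      (fun x => ∑ T ∈ Finset.univ.powerset, Real.exp ⟪u + v T, x⟫) ν := by
    apply integrable_finset_sum
    intro T _
    exact integrable_exp_inner ν _ (hfin _ (hvO T))
  refine hg.mono' (Continuous.aestronglyMeasurable (Real.continuous_exp.comp
    ((continuous_const.inner continuous_id).add (continuous_const.mul continuous_norm)))) ?_
  refine Filter.Eventually.of_forall fun x => ?_
  rw [Real.norm_eq_abs, abs_of_nonneg (Real.exp_pos _).le]
  have key : Real.exp (δ * ‖x‖) ≤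
      ∑ T ∈ Finset.univ.powerset,
        (∏ i ∈ T, Real.exp (δ * x i)) * ∏ i ∈ Finset.univ \ T, Real.exp (-(δ * x i)) := by
    rw [← Finset.prod_add]
    calc Real.exp (δ * ‖x‖) ≤ Real.exp (∑ i, δ * |x i|) := by
          apply Real.exp_le_exp.2
          rw [← Finset.mul_sum]
          exact mul_le_mul_of_nonneg_left (norm_le_sum_abs x) δpos.le
      _ = ∏ i, Real.exp (δ * |x i|) := Real.exp_sum ..
      _ ≤ ∏ i, (Real.exp (δ * x i) + Real.exp (-(δ * x i))) := by
          apply Finset.prod_le_prod (fun i _ => (Real.exp_pos _).le)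
          intro i _
          rcases abs_cases (x i) with ⟨h1, _⟩ | ⟨h1, _⟩
          · rw [mul_comm δ |x i|, h1, mul_comm]
            exact le_add_of_nonneg_right (Real.exp_pos _).le
          · rw [mul_comm δ |x i|, h1, neg_mul, mul_comm]
            exact le_add_of_nonneg_left (Real.exp_pos _).le
  calc Real.exp (⟪u, x⟫ + δ * ‖x‖) = Real.exp ⟪u, x⟫ * Real.exp (δ * ‖x‖) := Real.exp_add ..
    _ ≤ Real.exp ⟪u, x⟫ * ∑ T ∈ Finset.univ.powerset,
        (∏ i ∈ T, Real.exp (δ * x i)) * ∏ i ∈ Finset.univ \ T, Real.exp (-(δ * x i)) :=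
        mul_le_mul_of_nonneg_left key (Real.exp_pos _).le
    _ = ∑ T ∈ Finset.univ.powerset, Real.exp ⟪u + v T, x⟫ := by
        rw [Finset.mul_sum]
        apply Finset.sum_congr rfl
        intro T _
        rw [← Real.exp_sum, ← Real.exp_sum, ← Real.exp_add, ← Real.exp_add]
        congr 1
        have h3 : ⟪u + v T, x⟫ = ⟪u, x⟫ + ⟪v T, x⟫ := inner_add_left ..
        rw [h3]
        congr 1
        rw [PiLp.inner_apply]
        have hsplit : ∑ i, (inner ℝ (v T i) (x i) : ℝ) =
            ∑ i ∈ Finset.univ \ T, (inner ℝ (v T i) (x i) : ℝ)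
              + ∑ i ∈ T, (inner ℝ (v T i) (x i) : ℝ) :=
          (Finset.sum_sdiff (Finset.subset_univ T)).symm
        rw [hsplit, add_comm]
        congr 1
        · refine Finset.sum_congr rfl fun i hi => ?_
          have : i ∉ T := (Finset.mem_sdiff.1 hi).2
          simp [hv, this, RCLike.inner_apply, mul_comm]
        · exact Finset.sum_congr rfl fun i hi => by
            simp [hv, hi, RCLike.inner_apply, mul_comm]

lemma pow_div_factorial_le_exp {t : ℝ} (ht : 0 ≤ t) (n : ℕ) :
    t ^ n / n.factorial ≤ Real.exp t := by
  calc t ^ n / n.factorial ≤ ∑ i ∈ Finset.range (n + 1), t ^ i / i.factorial :=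
        Finset.single_le_sum (f := fun i => t ^ i / i.factorial)
          (fun i _ => by positivity) (Finset.self_mem_range_succ n)
    _ ≤ Real.exp t := Real.sum_le_exp_of_nonneg ht _

lemma integrable_exp_mul_pow {u : EuclideanSpace ℝ (Fin p)} {δ : ℝ} (hδ : 0 < δ)
    (hI : Integrable (fun x => Real.exp (⟪u, x⟫ + δ * ‖x‖)) ν) (n : ℕ) :
    Integrable (fun x => Real.exp ⟪u, x⟫ * ‖x‖ ^ n) ν := by
  refine (hI.const_mul ((n.factorial : ℝ) / δ ^ n)).mono'
    (Continuous.aestronglyMeasurable ?_) (.of_forall fun x => ?_)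
  · exact (Real.continuous_exp.comp (continuous_const.inner continuous_id)).mul
      (continuous_norm.pow n)
  · rw [Real.norm_eq_abs, abs_of_nonneg (by positivity)]
    have h1 : (δ * ‖x‖) ^ n / n.factorial ≤ Real.exp (δ * ‖x‖) :=
      pow_div_factorial_le_exp (by positivity) n
    have h2 : ‖x‖ ^ n ≤ (n.factorial : ℝ) / δ ^ n * Real.exp (δ * ‖x‖) := by
      rw [div_mul_eq_mul_div, le_div_iff₀ (pow_pos hδ n)]
      rw [div_le_iff₀ (by positivity : (0:ℝ) < (n.factorial : ℝ))] at h1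
      calc ‖x‖ ^ n * δ ^ n = (δ * ‖x‖) ^ n := by rw [mul_pow]; ring
        _ ≤ Real.exp (δ * ‖x‖) * n.factorial := h1
        _ = (n.factorial : ℝ) * Real.exp (δ * ‖x‖) := mul_comm _ _
    calc Real.exp ⟪u, x⟫ * ‖x‖ ^ n
        ≤ Real.exp ⟪u, x⟫ * ((n.factorial : ℝ) / δ ^ n * Real.exp (δ * ‖x‖)) :=
          mul_le_mul_of_nonneg_left h2 (Real.exp_pos _).le
      _ = (n.factorial : ℝ) / δ ^ n * Real.exp (⟪u, x⟫ + δ * ‖x‖) := by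
          rw [Real.exp_add]; ring

/-- the multilinear map `v ↦ ∏ j, (L x) (v j)` -/
noncomputable def A (n : ℕ) (x : EuclideanSpace ℝ (Fin p)) :
    ContinuousMultilinearMap ℂ (fun _ : Fin n => EuclideanSpace ℂ (Fin p)) ℂ :=
  (ContinuousMultilinearMap.mkPiAlgebraFin ℂ n ℂ).compContinuousLinearMap (fun _ => L x)

lemma A_apply (n : ℕ) (x : EuclideanSpace ℝ (Fin p))
    (v : Fin n → EuclideanSpace ℂ (Fin p)) : A n x v = ∏ j, L x (v j) := by
  simp [A, List.prod_ofFn]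

lemma norm_A_le (n : ℕ) (x : EuclideanSpace ℝ (Fin p)) : ‖A n x‖ ≤ ‖x‖ ^ n := by
  refine ContinuousMultilinearMap.opNorm_le_bound (by positivity) fun v => ?_
  rw [A_apply, norm_prod]
  calc ∏ j, ‖L x (v j)‖ ≤ ∏ j, ‖x‖ * ‖v j‖ := by
        refine Finset.prod_le_prod (fun j _ => norm_nonneg _) fun j _ => ?_
        exact ((L x).le_opNorm (v j)).trans
          (mul_le_mul_of_nonneg_right (norm_L_le x) (norm_nonneg _))
    _ = ‖x‖ ^ n * ∏ j, ‖v j‖ := by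
        rw [Finset.prod_mul_distrib, Finset.prod_const, Finset.card_univ, Fintype.card_fin]

lemma continuous_A (n : ℕ) : Continuous (A (p := p) n) := by
  have h1 : Continuous fun f : (Fin n → (EuclideanSpace ℂ (Fin p) →L[ℂ] ℂ)) =>
      (ContinuousMultilinearMap.mkPiAlgebraFin ℂ n ℂ).compContinuousLinearMapLRight f :=
    (ContinuousMultilinearMap.mkPiAlgebraFin ℂ n ℂ).compContinuousLinearMapLRight.cont
  exact h1.comp (continuous_pi fun _ => continuous_L)

lemma analyticAt_integral_exp {O : Set (EuclideanSpace ℝ (Fin p))} (hO : IsOpen O)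
    (hfin : ∀ u ∈ O, ∫⁻ x, ENNReal.ofReal (Real.exp ⟪u, x⟫) ∂ν < ⊤)
    {z₀ : EuclideanSpace ℂ (Fin p)}
    (hz : (WithLp.toLp 2 (fun i => (z₀ i).re) : EuclideanSpace ℝ (Fin p)) ∈ O) :
    AnalyticAt ℂ (fun z : EuclideanSpace ℂ (Fin p) =>
      ∫ x, Complex.exp (∑ i, z i * (x i : ℂ)) ∂ν) z₀ := by
  classical
  set u : EuclideanSpace ℝ (Fin p) := WithLp.toLp 2 (fun i => (z₀ i).re) with hu
  obtain ⟨δ, δpos, hI⟩ := exists_delta hO hfin hz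
  have hmom : ∀ n : ℕ, Integrable (fun x => Real.exp ⟪u, x⟫ * ‖x‖ ^ n) ν :=
    integrable_exp_mul_pow δpos hI
  set C : ℝ := ∫ x, Real.exp (⟪u, x⟫ + δ * ‖x‖) ∂ν with hC
  -- integrability of the multilinear-map-valued integrand
  have hAbound : ∀ n (x : EuclideanSpace ℝ (Fin p)),
      ‖Complex.exp (∑ i, z₀ i * (x i : ℂ)) • A n x‖ ≤ Real.exp ⟪u, x⟫ * ‖x‖ ^ n := by
    intro n x
    calc ‖Complex.exp (∑ i, z₀ i * (x i : ℂ)) • A n x‖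
        = ‖Complex.exp (∑ i, z₀ i * (x i : ℂ))‖ * ‖A n x‖ := by
          exact norm_smul (Complex.exp (∑ i, z₀ i * (x i : ℂ))) (A n x)
      _ = Real.exp ⟪u, x⟫ * ‖A n x‖ := by rw [norm_exp_sum]
      _ ≤ Real.exp ⟪u, x⟫ * ‖x‖ ^ n :=
          mul_le_mul_of_nonneg_left (norm_A_le n x) (Real.exp_pos _).le
  have hAint : ∀ n : ℕ,
      Integrable (fun x => Complex.exp (∑ i, z₀ i * (x i : ℂ)) • A n x) ν := by
    intro n
    exact (hmom n).mono'
      (((continuous_integrand z₀).smul (continuous_A n)).aestronglyMeasurable)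
      (.of_forall fun x => hAbound n x)
  -- the power series
  set P : FormalMultilinearSeries ℂ (EuclideanSpace ℂ (Fin p)) ℂ := fun n =>
    ((n.factorial : ℂ)⁻¹) • ∫ x, Complex.exp (∑ i, z₀ i * (x i : ℂ)) • A n x ∂ν with hP
  have hPbound : ∀ n : ℕ, ‖P n‖ ≤
      (n.factorial : ℝ)⁻¹ * ∫ x, Real.exp ⟪u, x⟫ * ‖x‖ ^ n ∂ν := by
    intro n
    have e1 : ‖P n‖ = ‖((n.factorial : ℂ))⁻¹‖
        * ‖∫ x, Complex.exp (∑ i, z₀ i * (x i : ℂ)) • A n x ∂ν‖ := by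
      simp only [hP]
      exact norm_smul ((n.factorial : ℂ))⁻¹
        (∫ x, Complex.exp (∑ i, z₀ i * (x i : ℂ)) • A n x ∂ν)
    
    have e2 : ‖((n.factorial : ℂ))⁻¹‖ = ((n.factorial : ℝ))⁻¹ := by simp
    rw [e1, e2]
    exact mul_le_mul_of_nonneg_left
      (norm_integral_le_of_norm_le (hmom n) (.of_forall (hAbound n))) (by positivity)
  have hCn : ∀ n : ℕ, ‖P n‖ * δ ^ n ≤ C := by
    intro n
    have h1 : ‖P n‖ * δ ^ n ≤
        ((n.factorial : ℝ)⁻¹ * δ ^ n) * ∫ x, Real.exp ⟪u, x⟫ * ‖x‖ ^ n ∂ν := by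
      calc ‖P n‖ * δ ^ n ≤
          ((n.factorial : ℝ)⁻¹ * ∫ x, Real.exp ⟪u, x⟫ * ‖x‖ ^ n ∂ν) * δ ^ n :=
            mul_le_mul_of_nonneg_right (hPbound n) (by positivity)
        _ = ((n.factorial : ℝ)⁻¹ * δ ^ n) * ∫ x, Real.exp ⟪u, x⟫ * ‖x‖ ^ n ∂ν := by ring
    refine h1.trans ?_
    rw [← integral_const_mul]
    refine integral_mono ((hmom n).const_mul _) hI fun x => ?_
    have h2 : (δ * ‖x‖) ^ n / n.factorial ≤ Real.exp (δ * ‖x‖) :=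
      pow_div_factorial_le_exp (by positivity) n
    calc (n.factorial : ℝ)⁻¹ * δ ^ n * (Real.exp ⟪u, x⟫ * ‖x‖ ^ n)
        = Real.exp ⟪u, x⟫ * ((δ * ‖x‖) ^ n / n.factorial) := by
          rw [mul_pow]; field_simp
      _ ≤ Real.exp ⟪u, x⟫ * Real.exp (δ * ‖x‖) :=
          mul_le_mul_of_nonneg_left h2 (Real.exp_pos _).le
      _ = Real.exp (⟪u, x⟫ + δ * ‖x‖) := (Real.exp_add _ _).symm
  have hps : HasFPowerSeriesOnBall (fun z : EuclideanSpace ℂ (Fin p) =>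
      ∫ x, Complex.exp (∑ i, z i * (x i : ℂ)) ∂ν) P z₀ (ENNReal.ofReal δ) := by
    constructor
    · rw [ENNReal.ofReal_eq_coe_nnreal δpos.le]
      exact P.le_radius_of_bound C fun n => by
        simpa [Real.coe_toNNReal δ δpos.le] using hCn n
    · exact ENNReal.ofReal_pos.2 δpos
    · intro y hy
      have hy' : ‖y‖ < δ := by
        rw [Metric.mem_eball, edist_zero_right, enorm_eq_nnnorm, ENNReal.ofReal_eq_coe_nnreal δpos.le,
          ENNReal.coe_lt_coe] at hy
        exact_mod_cast hy
      -- the term functions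
      set f : ℕ → EuclideanSpace ℝ (Fin p) → ℂ := fun n x =>
        ((n.factorial : ℂ)⁻¹) • (Complex.exp (∑ i, z₀ i * (x i : ℂ)) * (L x y) ^ n) with hf
      have hLbound : ∀ x : EuclideanSpace ℝ (Fin p), ‖L x y‖ ≤ ‖y‖ * ‖x‖ := fun x =>
        ((L x).le_opNorm y).trans (by
          rw [mul_comm]
          exact mul_le_mul_of_nonneg_left (norm_L_le x) (norm_nonneg _))
      have hfbound : ∀ n x, ‖f n x‖ ≤
          (n.factorial : ℝ)⁻¹ * ‖y‖ ^ n * (Real.exp ⟪u, x⟫ * ‖x‖ ^ n) := by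
        intro n x
        have e1 : ‖f n x‖ = (n.factorial : ℝ)⁻¹ * (Real.exp ⟪u, x⟫ * ‖L x y‖ ^ n) := by
          rw [hf]
          have e2 : ‖((n.factorial : ℂ))⁻¹‖ = ((n.factorial : ℝ))⁻¹ := by simp
          rw [norm_smul, e2, norm_mul, norm_pow, norm_exp_sum]
        rw [e1]
        calc (n.factorial : ℝ)⁻¹ * (Real.exp ⟪u, x⟫ * ‖L x y‖ ^ n)
            ≤ (n.factorial : ℝ)⁻¹ * (Real.exp ⟪u, x⟫ * (‖y‖ * ‖x‖) ^ n) := by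
              gcongr
              exact hLbound x
          _ = (n.factorial : ℝ)⁻¹ * ‖y‖ ^ n * (Real.exp ⟪u, x⟫ * ‖x‖ ^ n) := by ring
      have hcont : ∀ n : ℕ, Continuous (f n) := by
        intro n
        exact ((continuous_integrand z₀).mul
          (((ContinuousLinearMap.apply ℂ ℂ y).continuous.comp continuous_L).pow n)).const_smul
          ((n.factorial : ℂ)⁻¹)
      have hfint : ∀ n : ℕ, Integrable (f n) ν := by
        intro n
        refine ((hmom n).const_mul ((n.factorial : ℝ)⁻¹ * ‖y‖ ^ n)).mono'
          (hcont n).aestronglyMeasurable (.of_forall fun x => hfbound n x)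
      have hfsum : Summable fun n => ∫ x, ‖f n x‖ ∂ν := by
        apply summable_of_sum_range_le (c := C)
          (fun n => integral_nonneg fun x => norm_nonneg _)
        intro N
        rw [← integral_finset_sum _ fun n _ => (hfint n).norm]
        refine integral_mono (integrable_finset_sum _ fun n _ => (hfint n).norm) hI fun x => ?_
        calc ∑ n ∈ Finset.range N, ‖f n x‖
            ≤ ∑ n ∈ Finset.range N, Real.exp ⟪u, x⟫ * ((δ * ‖x‖) ^ n / n.factorial) := by
              refine Finset.sum_le_sum fun n _ => (hfbound n x).trans ?_
              calc (n.factorial : ℝ)⁻¹ * ‖y‖ ^ n * (Real.exp ⟪u, x⟫ * ‖x‖ ^ n)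
                  = Real.exp ⟪u, x⟫ * ((‖y‖ * ‖x‖) ^ n / n.factorial) := by
                    rw [mul_pow]; field_simp
                _ ≤ Real.exp ⟪u, x⟫ * ((δ * ‖x‖) ^ n / n.factorial) := by
                    gcongr
          _ = Real.exp ⟪u, x⟫ * ∑ n ∈ Finset.range N, (δ * ‖x‖) ^ n / n.factorial := by
              rw [Finset.mul_sum]
          _ ≤ Real.exp ⟪u, x⟫ * Real.exp (δ * ‖x‖) :=
              mul_le_mul_of_nonneg_left
                (Real.sum_le_exp_of_nonneg (by positivity) N) (Real.exp_pos _).le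
          _ = Real.exp (⟪u, x⟫ + δ * ‖x‖) := (Real.exp_add _ _).symm
      have hHS := hasSum_integral_of_summable_integral_norm hfint hfsum
      -- identify the sum
      have hsum_eq : ∀ x : EuclideanSpace ℝ (Fin p), (∑' n, f n x) =
          Complex.exp (∑ i, (z₀ + y) i * (x i : ℂ)) := by
        intro x
        have h1 : ∀ n : ℕ, f n x =
            Complex.exp (∑ i, z₀ i * (x i : ℂ)) * (((n.factorial : ℂ)⁻¹) • (L x y) ^ n) := by
          intro n; rw [hf]; simp only [smul_eq_mul]; ring
        rw [tsum_congr h1, tsum_mul_left]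
        have h2 : (∑' n : ℕ, ((n.factorial : ℂ)⁻¹) • (L x y) ^ n) = Complex.exp (L x y) := by
          rw [Complex.exp_eq_exp_ℂ, NormedSpace.exp_eq_tsum ℂ]
        rw [h2, ← Complex.exp_add]
        congr 1
        rw [L_apply, ← Finset.sum_add_distrib]
        exact Finset.sum_congr rfl fun i _ => by
          simp [PiLp.add_apply, add_mul]
      -- identify the terms
      have hterm : ∀ n : ℕ, (∫ x, f n x ∂ν) = P n fun _ => y := by
        intro n
        have h3 := (ContinuousMultilinearMap.apply ℂ
          (fun _ : Fin n => EuclideanSpace ℂ (Fin p)) ℂ (fun _ => y)).integral_comp_comm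
          (hAint n)
        simp only [ContinuousMultilinearMap.apply_apply] at h3
        rw [hP]
        simp only [ContinuousMultilinearMap.smul_apply]
        rw [← h3, hf, ← integral_smul]
        refine integral_congr_ae (.of_forall fun x => ?_)
        simp only [ContinuousMultilinearMap.smul_apply, A_apply, smul_eq_mul]
        rw [Finset.prod_const, Finset.card_univ, Fintype.card_fin]
      have : HasSum (fun n => P n fun _ => y)
          (∫ x, Complex.exp (∑ i, (z₀ + y) i * (x i : ℂ)) ∂ν) := by
        rw [← integral_congr_ae (.of_forall hsum_eq)]
        exact (funext hterm : (fun n => ∫ x, f n x ∂ν) = _) ▸ hHS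
      exact this
  exact hps.analyticAt

end Statement7Aux

/-- If `ν` is a finite measure on `ℝ^p` with `∫ e^{u·x} dν(x) < ∞` for all
`u` in an open set `O ⊆ ℝ^p`, then `z ↦ ∫ e^{z·x} dν(x)` is well-defined (the integrand is
integrable) and complex-analytic on the open strip `S(O) = {z ∈ ℂ^p : Re z ∈ O}`. -/
theorem statement7 {p : ℕ} (O : Set (EuclideanSpace ℝ (Fin p))) (hO : IsOpen O)
    (ν : Measure (EuclideanSpace ℝ (Fin p))) [IsFiniteMeasure ν]
    (hfin : ∀ u ∈ O, ∫⁻ x, ENNReal.ofReal (Real.exp ⟪u, x⟫) ∂ν < ⊤) :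
    (∀ z : EuclideanSpace ℂ (Fin p),
        ((EuclideanSpace.equiv (Fin p) ℝ).symm fun i => (z i).re) ∈ O →
        Integrable (fun x : EuclideanSpace ℝ (Fin p) =>
          Complex.exp (∑ i, z i * (x i : ℂ))) ν) ∧
      AnalyticOnNhd ℂ
        (fun z : EuclideanSpace ℂ (Fin p) =>
          ∫ x, Complex.exp (∑ i, z i * (x i : ℂ)) ∂ν)
        {z : EuclideanSpace ℂ (Fin p) |
          ((EuclideanSpace.equiv (Fin p) ℝ).symm fun i => (z i).re) ∈ O} := by
  constructor
  · intro z hz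
    exact Statement7Aux.integrable_integrand hfin hz
  · intro z hz
    exact Statement7Aux.analyticAt_integral_exp hO hfin hz
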